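/- (Proposition 2, two-qubit case) Let p, q be unit vectors in EuclideanSpace ℝ (Fin 3), let σ = (ρ_p ⊗ ρ_q + ρ_q ⊗ ρ_p)/2, and let S be the 4×4 swap matrix S = !![1,0,0,0; 0,0,1,0; 0,1,0,0; 0,0,0,1]. Then S * σ = σ if and only if p = q. That is, the symmetrization of two pure qubit states lies in the symmetric subspace if and only if the two polarization vectors coincide. -/

import Mathlib

open Matrix

set_option maxHeartbeats 4000000

/-- The Bloch matrix `ρ_p = (1/2)(I + p₁σx + p₂σy + p₃σz)` of a vector `p ∈ ℝ³`. -/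
noncomputable def blochMat (p : EuclideanSpace ℝ (Fin 3)) : Matrix (Fin 2) (Fin 2) ℂ :=
  (1 / 2 : ℂ) • ((1 : Matrix (Fin 2) (Fin 2) ℂ)
    + (p 0 : ℂ) • !![0, 1; 1, 0]
    + (p 1 : ℂ) • !![0, -Complex.I; Complex.I, 0]
    + (p 2 : ℂ) • !![1, 0; 0, -1])

/-- Enumeration of the two-qubit computational basis in the order (00, 01, 10, 11). -/
def idx : Fin 4 → Fin 2 × Fin 2 := ![(0, 0), (0, 1), (1, 0), (1, 1)]

/-- The Kronecker product of two 2×2 matrices, as a 4×4 matrix with row/column indices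
ordered (00, 01, 10, 11). -/
def kron4 (A B : Matrix (Fin 2) (Fin 2) ℂ) : Matrix (Fin 4) (Fin 4) ℂ :=
  Matrix.of fun i j => A (idx i).1 (idx j).1 * B (idx i).2 (idx j).2

/-- (Proposition 2, two-qubit case.) For unit vectors `p, q ∈ ℝ³`, the symmetrization
`σ = (ρ_p ⊗ ρ_q + ρ_q ⊗ ρ_p)/2` lies in the symmetric subspace, i.e. `S σ = σ` for the
swap matrix `S`, if and only if `p = q`. -/
theorem symmetrization_in_symmetric_subspace_iff (p q : EuclideanSpace ℝ (Fin 3))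
    (hp : ‖p‖ = 1) (hq : ‖q‖ = 1) :
    (!![1, 0, 0, 0; 0, 0, 1, 0; 0, 1, 0, 0; 0, 0, 0, 1] : Matrix (Fin 4) (Fin 4) ℂ) *
          ((1 / 2 : ℂ) • (kron4 (blochMat p) (blochMat q) + kron4 (blochMat q) (blochMat p)))
        = (1 / 2 : ℂ) • (kron4 (blochMat p) (blochMat q) + kron4 (blochMat q) (blochMat p))
      ↔ p = q := by
  constructor
  · intro h
    have h11 := congrFun (congrFun h 1) 1
    simp [Matrix.mul_apply, kron4, blochMat, idx, Fin.sum_univ_succ, Matrix.one_apply] at h11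
    ring_nf at h11
    rw [Complex.I_sq] at h11
    have hr : ((p 0 * q 0 + p 1 * q 1 + p 2 * q 2 : ℝ) : ℂ) = ((1 : ℝ) : ℂ) := by
      push_cast
      linear_combination 4 * h11
    have hr' : p 0 * q 0 + p 1 * q 1 + p 2 * q 2 = 1 := by exact Complex.ofReal_injective hr
    refine (inner_eq_one_iff_of_norm_eq_one hp hq (𝕜 := ℝ)).mp ?_
    rw [PiLp.inner_apply]
    simp only [RCLike.inner_apply, starRingEnd_apply, star_trivial, Fin.sum_univ_three]
    linarith [hr']
  · rintro rfl
    have hq2 : (p 0:ℝ)^2 + (p 1)^2 + (p 2)^2 = 1 := by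
      rw [EuclideanSpace.norm_eq, Real.sqrt_eq_one] at hq
      simp [Fin.sum_univ_succ, Real.norm_eq_abs, sq_abs] at hq
      linarith [hq]
    have hC : ((p 0:ℂ))^2 + ((p 1:ℂ))^2 + ((p 2:ℂ))^2 = 1 := by
      have := congrArg (Complex.ofReal) hq2; push_cast at this; exact this
    ext i j
    fin_cases i <;> fin_cases j <;>
      simp [Matrix.mul_apply, kron4, blochMat, idx, Fin.sum_univ_succ, Matrix.one_apply] <;>
      first
        | ring1
        | linear_combination hC/4 - ((p 1:ℂ)^2/4) * Complex.I_sq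
        | linear_combination -hC/4 + ((p 1:ℂ)^2/4) * Complex.I_sq
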